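/- For fixed positive semidefinite Y ∈ M_ℓ(ℂ), the map X ↦ tgm(X,Y) is concave on the cone of positive semidefinite ℓ×ℓ complex matrices: tgm(tX₁ + (1−t)X₂, Y) ≥ t·tgm(X₁,Y) + (1−t)·tgm(X₂,Y) for t ∈ [0,1]. -/

import Mathlib

open Matrix
open scoped ComplexOrder

/-- The positive semidefinite square root of a positive semidefinite matrix
(the definition `Matrix.PosSemidef.sqrt` of the older Mathlib, removed since). -/
noncomputable def Matrix.PosSemidef.sqrt {𝕜 : Type*} [RCLike 𝕜] {n : Type*} [Fintype n]
    [DecidableEq n] {A : Matrix n n 𝕜} (hA : A.PosSemidef) : Matrix n n 𝕜 :=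
  hA.1.eigenvectorUnitary.1 * diagonal ((↑) ∘ (Real.sqrt ∘ hA.1.eigenvalues)) *
    (star hA.1.eigenvectorUnitary : Matrix n n 𝕜)

theorem Matrix.PosSemidef.posSemidef_sqrt {n : Type*} [Fintype n] [DecidableEq n]
    {A : Matrix n n ℂ} (hA : A.PosSemidef) : hA.sqrt.PosSemidef := by
  have hd : PosSemidef (diagonal (((↑) : ℝ → ℂ) ∘ (Real.sqrt ∘ hA.1.eigenvalues))) :=
    PosSemidef.diagonal (fun i => by
      simp only [Function.comp_apply, Pi.zero_apply]
      exact Complex.zero_le_real.mpr (Real.sqrt_nonneg _))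
  exact hd.mul_mul_conjTranspose_same (hA.1.eigenvectorUnitary : Matrix n n ℂ)

/-- The product `√X * Y * √X` is positive semidefinite. -/
theorem sqrt_mul_mul_sqrt_posSemidef {n : Type*} [Fintype n] [DecidableEq n]
    {X Y : Matrix n n ℂ} (hX : X.PosSemidef) (hY : Y.PosSemidef) :
    (hX.sqrt * Y * hX.sqrt).PosSemidef := by
  have h := hY.conjTranspose_mul_mul_same (B := hX.sqrt)
  rwa [hX.posSemidef_sqrt.isHermitian.eq] at h

/-- The tracial geometric mean `tgm(X,Y) = trace √(√X·Y·√X)`. -/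
noncomputable def tgm {n : Type*} [Fintype n] [DecidableEq n]
    {X Y : Matrix n n ℂ} (hX : X.PosSemidef) (hY : Y.PosSemidef) : ℝ :=
  ((sqrt_mul_mul_sqrt_posSemidef hX hY).sqrt.trace).re

namespace TgmAux

variable {n : Type*} [Fintype n] [DecidableEq n]

lemma trace_conj_diag (U : Matrix.unitaryGroup n ℂ) (d : n → ℂ) :
    ((U : Matrix n n ℂ) * diagonal d * star (U : Matrix n n ℂ)).trace = ∑ i, d i := by
  rw [Matrix.trace_mul_comm, ← Matrix.mul_assoc, Unitary.coe_star_mul_self, Matrix.one_mul,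
    Matrix.trace_diagonal]

lemma trace_sqrt {A : Matrix n n ℂ} (hA : A.PosSemidef) :
    hA.sqrt.trace = ∑ i, (Real.sqrt (hA.1.eigenvalues i) : ℂ) := by
  rw [Matrix.PosSemidef.sqrt, trace_conj_diag]
  rfl

lemma trace_sqrt_re {A : Matrix n n ℂ} (hA : A.PosSemidef) :
    hA.sqrt.trace.re = ∑ i, Real.sqrt (hA.1.eigenvalues i) := by
  rw [trace_sqrt, Complex.re_sum]
  simp

lemma conj_mul (U : Matrix.unitaryGroup n ℂ) (A B : Matrix n n ℂ) :
    ((U : Matrix n n ℂ) * A * star (U : Matrix n n ℂ)) *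
      ((U : Matrix n n ℂ) * B * star (U : Matrix n n ℂ))
      = (U : Matrix n n ℂ) * (A * B) * star (U : Matrix n n ℂ) := by
  simp only [Matrix.mul_assoc]
  congr 1
  congr 1
  rw [← Matrix.mul_assoc (star (U : Matrix n n ℂ)), Unitary.coe_star_mul_self, Matrix.one_mul]

lemma conj_diag_pow (U : Matrix.unitaryGroup n ℂ) (d : n → ℂ) (k : ℕ) :
    ((U : Matrix n n ℂ) * diagonal d * star (U : Matrix n n ℂ)) ^ k
      = (U : Matrix n n ℂ) * diagonal (fun i => d i ^ k) * star (U : Matrix n n ℂ) := by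
  induction k with
  | zero =>
      have : (diagonal (fun i => d i ^ 0) : Matrix n n ℂ) = 1 := by
        simp [← Pi.one_def]
      rw [pow_zero, this, Matrix.mul_one]
      exact (Matrix.mem_unitaryGroup_iff.mp U.2).symm
  | succ k ih =>
      rw [pow_succ, ih, conj_mul, Matrix.diagonal_mul_diagonal]
      simp [pow_succ]

lemma psd_sqrt_mul_self {A : Matrix n n ℂ} (hA : A.PosSemidef) : hA.sqrt * hA.sqrt = A := by
  have h := conj_diag_pow hA.1.eigenvectorUnitary (RCLike.ofReal ∘ (Real.sqrt ∘ hA.1.eigenvalues)) 2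
  rw [pow_two] at h
  have hd : (fun i => ((RCLike.ofReal ∘ (Real.sqrt ∘ hA.1.eigenvalues)) i : ℂ) ^ 2)
      = RCLike.ofReal ∘ hA.1.eigenvalues := by
    funext i
    simp only [Function.comp_apply, ← RCLike.ofReal_pow, Real.sq_sqrt (hA.eigenvalues_nonneg i)]
  rw [Matrix.PosSemidef.sqrt, h, hd]
  conv_rhs => rw [hA.1.spectral_theorem, Unitary.conjStarAlgAut_apply]

lemma trace_pow {A : Matrix n n ℂ} (hA : A.IsHermitian) (k : ℕ) :
    (A ^ k).trace = ∑ i, ((hA.eigenvalues i : ℂ)) ^ k := by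
  conv_lhs => rw [hA.spectral_theorem, Unitary.conjStarAlgAut_apply]
  rw [conj_diag_pow, trace_conj_diag]
  simp




variable {n : Type*} [Fintype n] [DecidableEq n]

lemma conjT_mul_pow (B : Matrix n n ℂ) (k : ℕ) :
    (Bᴴ * B) ^ (k + 1) = Bᴴ * (B * Bᴴ) ^ k * B := by
  induction k with
  | zero => simp
  | succ k ih =>
      rw [pow_succ, ih, pow_succ]
      simp only [Matrix.mul_assoc]

lemma trace_pow_eq (B : Matrix n n ℂ) (k : ℕ) :
    ((Bᴴ * B) ^ k).trace = ((B * Bᴴ) ^ k).trace := by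
  cases k with
  | zero => simp
  | succ k =>
      rw [conjT_mul_pow, Matrix.trace_mul_comm, ← Matrix.mul_assoc, ← pow_succ']

lemma sum_sqrt_eq {lam mu : n → ℝ} (hl : ∀ i, 0 ≤ lam i) (hm : ∀ i, 0 ≤ mu i)
    (h : ∀ k : ℕ, ∑ i, lam i ^ k = ∑ i, mu i ^ k) :
    ∑ i, Real.sqrt (lam i) = ∑ i, Real.sqrt (mu i) := by
  set R : ℝ := (∑ i, lam i) + (∑ i, mu i) with hR
  have hR0 : 0 ≤ R := add_nonneg (Finset.sum_nonneg fun i _ => hl i)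
    (Finset.sum_nonneg fun i _ => hm i)
  have hlmem : ∀ i, lam i ∈ Set.Icc (0:ℝ) R := fun i =>
    ⟨hl i, le_trans (Finset.single_le_sum (fun j _ => hl j) (Finset.mem_univ i))
      (le_add_of_nonneg_right (Finset.sum_nonneg fun j _ => hm j))⟩
  have hmmem : ∀ i, mu i ∈ Set.Icc (0:ℝ) R := fun i =>
    ⟨hm i, le_trans (Finset.single_le_sum (fun j _ => hm j) (Finset.mem_univ i))
      (le_add_of_nonneg_left (Finset.sum_nonneg fun j _ => hl j))⟩
  have key : ∀ ε : ℝ, 0 < ε →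
      |(∑ i, Real.sqrt (lam i)) - ∑ i, Real.sqrt (mu i)| ≤ 2 * (Fintype.card n) * ε := by
    intro ε hε
    obtain ⟨p, hp⟩ := exists_polynomial_near_of_continuousOn 0 R Real.sqrt
      (Real.continuous_sqrt.continuousOn) ε hε
    have hpeq : ∑ i, p.eval (lam i) = ∑ i, p.eval (mu i) := by
      simp only [Polynomial.eval_eq_sum_range]
      rw [Finset.sum_comm, Finset.sum_comm (γ := n)]
      refine Finset.sum_congr rfl fun k _ => ?_
      rw [← Finset.mul_sum, ← Finset.mul_sum, h k]
    have h1 : |(∑ i, Real.sqrt (lam i)) - ∑ i, p.eval (lam i)| ≤ (Fintype.card n) * ε := by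
      rw [← Finset.sum_sub_distrib]
      refine le_trans (Finset.abs_sum_le_sum_abs _ _) ?_
      rw [← Finset.card_univ, ← smul_eq_mul, Nat.cast_smul_eq_nsmul]
      refine Finset.sum_le_card_nsmul _ _ _ fun i _ => ?_
      rw [abs_sub_comm]
      exact le_of_lt (hp (lam i) (hlmem i))
    have h2 : |(∑ i, Real.sqrt (mu i)) - ∑ i, p.eval (mu i)| ≤ (Fintype.card n) * ε := by
      rw [← Finset.sum_sub_distrib]
      refine le_trans (Finset.abs_sum_le_sum_abs _ _) ?_
      rw [← Finset.card_univ, ← smul_eq_mul, Nat.cast_smul_eq_nsmul]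
      refine Finset.sum_le_card_nsmul _ _ _ fun i _ => ?_
      rw [abs_sub_comm]
      exact le_of_lt (hp (mu i) (hmmem i))
    calc |(∑ i, Real.sqrt (lam i)) - ∑ i, Real.sqrt (mu i)|
        = |((∑ i, Real.sqrt (lam i)) - ∑ i, p.eval (lam i))
            - ((∑ i, Real.sqrt (mu i)) - ∑ i, p.eval (mu i))| := by rw [hpeq]; ring_nf
      _ ≤ _ := by
          refine le_trans (abs_sub _ _) ?_
          linarith
  have habs : |(∑ i, Real.sqrt (lam i)) - ∑ i, Real.sqrt (mu i)| ≤ 0 := by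
    refine le_of_forall_pos_le_add ?_
    intro ε hε
    have h2 := key (ε / (2 * (Fintype.card n) + 1)) (by positivity)
    have : 2 * (Fintype.card n : ℝ) * (ε / (2 * (Fintype.card n) + 1)) ≤ ε := by
      rw [div_eq_inv_mul]
      have hc : (0:ℝ) < 2 * (Fintype.card n) + 1 := by positivity
      rw [mul_comm ((2 * (Fintype.card n : ℝ) + 1))⁻¹ ε, ← mul_assoc]
      calc 2 * (Fintype.card n : ℝ) * ε * (2 * (Fintype.card n : ℝ) + 1)⁻¹
          ≤ (2 * (Fintype.card n : ℝ) + 1) * ε * (2 * (Fintype.card n : ℝ) + 1)⁻¹ := by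
            have h1 : (0:ℝ) ≤ ε := le_of_lt hε
            have h2 : (0:ℝ) ≤ (2 * (Fintype.card n : ℝ) + 1)⁻¹ := by positivity
            have h3 : 2 * (Fintype.card n : ℝ) ≤ 2 * (Fintype.card n : ℝ) + 1 := by linarith
            exact mul_le_mul_of_nonneg_right (mul_le_mul_of_nonneg_right h3 h1) h2
        _ = ε := by field_simp
    linarith
  have := abs_nonneg ((∑ i, Real.sqrt (lam i)) - ∑ i, Real.sqrt (mu i))
  have : (∑ i, Real.sqrt (lam i)) - ∑ i, Real.sqrt (mu i) = 0 := by
    rw [← abs_eq_zero]; linarith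
  linarith




variable {n : Type*} [Fintype n] [DecidableEq n]

lemma psd_diag_re_nonneg {A : Matrix n n ℂ} (hA : A.PosSemidef) (i : n) : 0 ≤ (A i i).re := by
  have h := hA.dotProduct_mulVec_nonneg (Pi.single i 1)
  have he : star (Pi.single i 1 : n → ℂ) ⬝ᵥ A *ᵥ Pi.single i 1 = A i i := by
    simp [Matrix.mulVec_single, dotProduct, Pi.single_apply]
  rw [he] at h
  simpa using (Complex.le_def.mp h).1

lemma conj_diag_entry (M : Matrix n n ℂ) (d : n → ℝ) (i : n) :
    ((star M * diagonal (fun j => (d j : ℂ)) * M) i i).re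
      = ∑ j, d j * Complex.normSq (M j i) := by
  have h1 : (star M * diagonal (fun j => (d j : ℂ)) * M) i i
      = ∑ k, (d k : ℂ) * (Complex.normSq (M k i) : ℂ) := by
    rw [Matrix.mul_apply]
    refine Finset.sum_congr rfl fun k _ => ?_
    rw [Matrix.mul_diagonal, Matrix.star_eq_conjTranspose, Matrix.conjTranspose_apply,
      mul_comm _ ((d k : ℂ)), mul_assoc, Complex.star_def, ← Complex.normSq_eq_conj_mul_self]
  rw [h1, Complex.re_sum]
  refine Finset.sum_congr rfl fun k _ => ?_
  rw [← Complex.ofReal_mul, Complex.ofReal_re]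

lemma unitary_col_sum {M : Matrix n n ℂ} (hM : M ∈ Matrix.unitaryGroup n ℂ) (i : n) :
    ∑ j, Complex.normSq (M j i) = 1 := by
  have h := Matrix.mem_unitaryGroup_iff'.mp hM
  have h2 := congrArg (fun N : Matrix n n ℂ => (N i i).re) h
  simp only [Matrix.mul_apply, Matrix.one_apply_eq, Complex.one_re] at h2
  rw [← h2, Complex.re_sum]
  refine Finset.sum_congr rfl fun j _ => ?_
  rw [Matrix.star_eq_conjTranspose, Matrix.conjTranspose_apply, Complex.star_def,
    ← Complex.normSq_eq_conj_mul_self, Complex.ofReal_re]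

lemma unitary_row_sum {M : Matrix n n ℂ} (hM : M ∈ Matrix.unitaryGroup n ℂ) (j : n) :
    ∑ i, Complex.normSq (M j i) = 1 := by
  have h := Matrix.mem_unitaryGroup_iff.mp hM
  have h2 := congrArg (fun N : Matrix n n ℂ => (N j j).re) h
  simp only [Matrix.mul_apply, Matrix.one_apply_eq, Complex.one_re] at h2
  rw [← h2, Complex.re_sum]
  refine Finset.sum_congr rfl fun i _ => ?_
  rw [Matrix.star_eq_conjTranspose, Matrix.conjTranspose_apply, mul_comm, Complex.star_def,
    ← Complex.normSq_eq_conj_mul_self, Complex.ofReal_re]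

lemma jensen_sqrt {ι : Type*} [Fintype ι] (p mu : ι → ℝ) (hp : ∀ j, 0 ≤ p j)
    (hmu : ∀ j, 0 ≤ mu j) (hsum : ∑ j, p j = 1) :
    ∑ j, p j * Real.sqrt (mu j) ≤ Real.sqrt (∑ j, p j * mu j) := by
  apply Real.le_sqrt_of_sq_le
  have := Finset.sum_sq_le_sum_mul_sum_of_sq_eq_mul Finset.univ
    (r := fun j => p j * Real.sqrt (mu j)) (f := fun j => p j) (g := fun j => p j * mu j)
    (fun j _ => hp j) (fun j _ => mul_nonneg (hp j) (hmu j))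
    (fun j _ => by rw [mul_pow, Real.sq_sqrt (hmu j)]; ring)
  rwa [hsum, one_mul] at this


lemma trace_sqrt_le {B : Matrix n n ℂ} (hB : B.PosSemidef) (W : Matrix.unitaryGroup n ℂ) :
    hB.sqrt.trace.re ≤ ∑ i, Real.sqrt
      (((star (W : Matrix n n ℂ) * B * (W : Matrix n n ℂ)) i i).re) := by
  set M : Matrix n n ℂ := star (hB.1.eigenvectorUnitary : Matrix n n ℂ) * (W : Matrix n n ℂ)
    with hMdef
  have hMmem : M ∈ Matrix.unitaryGroup n ℂ :=
    mul_mem (Unitary.star_mem hB.1.eigenvectorUnitary.2) W.2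
  have hspec : star (W : Matrix n n ℂ) * B * (W : Matrix n n ℂ)
      = star M * diagonal (fun j => ((hB.1.eigenvalues j : ℝ) : ℂ)) * M := by
    conv_lhs => rw [hB.1.spectral_theorem, Unitary.conjStarAlgAut_apply]
    rw [hMdef, Matrix.star_mul, star_star]
    have : (RCLike.ofReal ∘ hB.1.eigenvalues : n → ℂ)
        = fun j => ((hB.1.eigenvalues j : ℝ) : ℂ) := rfl
    rw [this]
    simp only [Matrix.mul_assoc]
  have hentry : ∀ i, ((star (W : Matrix n n ℂ) * B * (W : Matrix n n ℂ)) i i).re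
      = ∑ j, hB.1.eigenvalues j * Complex.normSq (M j i) := by
    intro i
    rw [hspec]
    exact conj_diag_entry M hB.1.eigenvalues i
  rw [trace_sqrt_re]
  calc ∑ j, Real.sqrt (hB.1.eigenvalues j)
      = ∑ j, (∑ i, Complex.normSq (M j i)) * Real.sqrt (hB.1.eigenvalues j) := by
        refine Finset.sum_congr rfl fun j _ => ?_
        rw [unitary_row_sum hMmem j, one_mul]
    _ = ∑ i, ∑ j, Complex.normSq (M j i) * Real.sqrt (hB.1.eigenvalues j) := by
        simp_rw [Finset.sum_mul]
        rw [Finset.sum_comm]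
    _ ≤ ∑ i, Real.sqrt (∑ j, Complex.normSq (M j i) * hB.1.eigenvalues j) := by
        refine Finset.sum_le_sum fun i _ => ?_
        exact jensen_sqrt _ _ (fun j => Complex.normSq_nonneg _)
          (fun j => hB.eigenvalues_nonneg j) (unitary_col_sum hMmem i)
    _ = ∑ i, Real.sqrt (((star (W : Matrix n n ℂ) * B * (W : Matrix n n ℂ)) i i).re) := by
        refine Finset.sum_congr rfl fun i _ => ?_
        rw [hentry i]
        congr 1
        exact Finset.sum_congr rfl fun j _ => mul_comm _ _

lemma sqrt_two_point {a b x y : ℝ} (ha : 0 ≤ a) (hb : 0 ≤ b) (hab : a + b = 1)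
    (hx : 0 ≤ x) (hy : 0 ≤ y) :
    a * Real.sqrt x + b * Real.sqrt y ≤ Real.sqrt (a * x + b * y) := by
  apply Real.le_sqrt_of_sq_le
  have hb1 : b = 1 - a := by linarith
  subst hb1
  nlinarith [mul_nonneg (mul_nonneg ha hb) (sq_nonneg (Real.sqrt x - Real.sqrt y)),
    Real.sq_sqrt hx, Real.sq_sqrt hy, Real.sqrt_nonneg x, Real.sqrt_nonneg y]

lemma tr_sqrt_concave {P Q : Matrix n n ℂ} (hP : P.PosSemidef) (hQ : Q.PosSemidef)
    {a b : ℝ} (ha : 0 ≤ a) (hb : 0 ≤ b) (hab : a + b = 1)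
    (hM : ((a : ℂ) • P + (b : ℂ) • Q).PosSemidef) :
    a * hP.sqrt.trace.re + b * hQ.sqrt.trace.re ≤ hM.sqrt.trace.re := by
  set W := hM.1.eigenvectorUnitary with hW
  set x : n → ℝ := fun i => ((star (W : Matrix n n ℂ) * P * (W : Matrix n n ℂ)) i i).re with hxd
  set y : n → ℝ := fun i => ((star (W : Matrix n n ℂ) * Q * (W : Matrix n n ℂ)) i i).re with hyd
  have hPW : (star (W : Matrix n n ℂ) * P * (W : Matrix n n ℂ)).PosSemidef := by
    have := hP.conjTranspose_mul_mul_same (B := (W : Matrix n n ℂ))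
    rwa [← Matrix.star_eq_conjTranspose] at this
  have hQW : (star (W : Matrix n n ℂ) * Q * (W : Matrix n n ℂ)).PosSemidef := by
    have := hQ.conjTranspose_mul_mul_same (B := (W : Matrix n n ℂ))
    rwa [← Matrix.star_eq_conjTranspose] at this
  have hx : ∀ i, 0 ≤ x i := fun i => psd_diag_re_nonneg hPW i
  have hy : ∀ i, 0 ≤ y i := fun i => psd_diag_re_nonneg hQW i
  have hlam : ∀ i, hM.1.eigenvalues i = a * x i + b * y i := by
    intro i
    have h := hM.1.conjStarAlgAut_star_eigenvectorUnitary
    rw [Unitary.conjStarAlgAut_star_apply] at h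
    have hsplit : star (W : Matrix n n ℂ) * ((a : ℂ) • P + (b : ℂ) • Q) * (W : Matrix n n ℂ)
        = (a : ℂ) • (star (W : Matrix n n ℂ) * P * (W : Matrix n n ℂ))
          + (b : ℂ) • (star (W : Matrix n n ℂ) * Q * (W : Matrix n n ℂ)) := by
      rw [Matrix.mul_add, Matrix.add_mul, Matrix.mul_smul, Matrix.smul_mul,
        Matrix.mul_smul, Matrix.smul_mul]
    rw [hsplit] at h
    have h2 := congrArg (fun N : Matrix n n ℂ => (N i i).re) h
    simp only [Matrix.add_apply, Matrix.smul_apply, smul_eq_mul, Complex.add_re,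
      Complex.re_ofReal_mul, Matrix.diagonal_apply_eq, Function.comp_apply,
      RCLike.ofReal_re, Complex.ofReal_re] at h2
    exact h2.symm
  conv_rhs => rw [trace_sqrt_re]
  calc a * hP.sqrt.trace.re + b * hQ.sqrt.trace.re
      ≤ a * (∑ i, Real.sqrt (x i)) + b * (∑ i, Real.sqrt (y i)) := by
        have h1 := trace_sqrt_le hP W
        have h2 := trace_sqrt_le hQ W
        have := mul_le_mul_of_nonneg_left h1 ha
        have := mul_le_mul_of_nonneg_left h2 hb
        nlinarith
    _ = ∑ i, (a * Real.sqrt (x i) + b * Real.sqrt (y i)) := by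
        rw [Finset.sum_add_distrib, Finset.mul_sum, Finset.mul_sum]
    _ ≤ ∑ i, Real.sqrt (hM.1.eigenvalues i) := by
        refine Finset.sum_le_sum fun i _ => ?_
        rw [hlam i]
        exact sqrt_two_point ha hb hab (hx i) (hy i)


lemma trace_sqrt_congr {A B : Matrix n n ℂ} (h : A = B) (hA : A.PosSemidef)
    (hB : B.PosSemidef) : hA.sqrt.trace = hB.sqrt.trace := by subst h; rfl

lemma trace_sqrt_re_swap (B : Matrix n n ℂ) (h1 : (Bᴴ * B).PosSemidef)
    (h2 : (B * Bᴴ).PosSemidef) : h1.sqrt.trace.re = h2.sqrt.trace.re := by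
  have hk : ∀ k : ℕ, ∑ i, h1.1.eigenvalues i ^ k = ∑ i, h2.1.eigenvalues i ^ k := by
    intro k
    have e1 := trace_pow h1.1 k
    have e2 := trace_pow h2.1 k
    have e3 := trace_pow_eq B k
    rw [e1, e2] at e3
    have := congrArg Complex.re e3
    rw [Complex.re_sum, Complex.re_sum] at this
    simpa [← Complex.ofReal_pow] using this
  rw [trace_sqrt_re, trace_sqrt_re]
  exact sum_sqrt_eq (fun i => h1.eigenvalues_nonneg i) (fun i => h2.eigenvalues_nonneg i) hk


lemma swap_psd {X Y : Matrix n n ℂ} (hX : X.PosSemidef) (hY : Y.PosSemidef) :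
    (hY.sqrt * X * hY.sqrt).PosSemidef := by
  have h := hX.conjTranspose_mul_mul_same (B := hY.sqrt)
  rwa [hY.posSemidef_sqrt.isHermitian.eq] at h

set_option maxHeartbeats 1000000 in
lemma tgm_eq {X Y : Matrix n n ℂ} (hX : X.PosSemidef) (hY : Y.PosSemidef) :
    tgm hX hY = (swap_psd hX hY).sqrt.trace.re := by
  set B : Matrix n n ℂ := hY.sqrt * hX.sqrt with hBdef
  have hBB : (Bᴴ * B).PosSemidef := Matrix.posSemidef_conjTranspose_mul_self B
  have hBB' : (B * Bᴴ).PosSemidef := Matrix.posSemidef_self_mul_conjTranspose B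
  have hBt : Bᴴ = hX.sqrt * hY.sqrt := by
    rw [hBdef, Matrix.conjTranspose_mul, hX.posSemidef_sqrt.isHermitian.eq,
      hY.posSemidef_sqrt.isHermitian.eq]
  have h1 : Bᴴ * B = hX.sqrt * Y * hX.sqrt := by
    rw [hBt, hBdef]
    simp only [Matrix.mul_assoc]
    rw [← Matrix.mul_assoc hY.sqrt hY.sqrt hX.sqrt, psd_sqrt_mul_self hY]
  have h2 : B * Bᴴ = hY.sqrt * X * hY.sqrt := by
    rw [hBt, hBdef]
    simp only [Matrix.mul_assoc]
    rw [← Matrix.mul_assoc hX.sqrt hX.sqrt hY.sqrt, psd_sqrt_mul_self hX]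
  have e1 := congrArg Complex.re
    (trace_sqrt_congr h1.symm (sqrt_mul_mul_sqrt_posSemidef hX hY) hBB)
  have e2 := trace_sqrt_re_swap B hBB hBB'
  have e3 := congrArg Complex.re (trace_sqrt_congr h2 hBB' (swap_psd hX hY))
  rw [tgm]
  rw [show ((sqrt_mul_mul_sqrt_posSemidef hX hY).sqrt.trace).re
      = hBB.sqrt.trace.re from e1, e2, e3]

end TgmAux


set_option maxHeartbeats 1000000 in
/-- For fixed positive semidefinite `Y`, the map `X ↦ tgm(X,Y)` is concave on the
positive semidefinite cone. -/
theorem tgm_concave_left {ℓ : ℕ} {X₁ X₂ Y : Matrix (Fin ℓ) (Fin ℓ) ℂ}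
    (hX₁ : X₁.PosSemidef) (hX₂ : X₂.PosSemidef) (hY : Y.PosSemidef)
    {t : ℝ} (ht0 : 0 ≤ t) (ht1 : t ≤ 1)
    (hC : ((t : ℂ) • X₁ + ((1 - t : ℝ) : ℂ) • X₂).PosSemidef) :
    t * tgm hX₁ hY + (1 - t) * tgm hX₂ hY ≤ tgm hC hY := by
  have hs0 : (0:ℝ) ≤ 1 - t := by linarith
  have hab : t + (1 - t) = 1 := by ring
  have hsplit : hY.sqrt * ((t : ℂ) • X₁ + ((1 - t : ℝ) : ℂ) • X₂) * hY.sqrt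
      = (t : ℂ) • (hY.sqrt * X₁ * hY.sqrt)
        + ((1 - t : ℝ) : ℂ) • (hY.sqrt * X₂ * hY.sqrt) := by
    rw [Matrix.mul_add, Matrix.add_mul, Matrix.mul_smul, Matrix.smul_mul,
      Matrix.mul_smul, Matrix.smul_mul]
  have hMps : ((t : ℂ) • (hY.sqrt * X₁ * hY.sqrt)
      + ((1 - t : ℝ) : ℂ) • (hY.sqrt * X₂ * hY.sqrt)).PosSemidef :=
    hsplit ▸ TgmAux.swap_psd hC hY
  have main := TgmAux.tr_sqrt_concave (TgmAux.swap_psd hX₁ hY) (TgmAux.swap_psd hX₂ hY)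
    ht0 hs0 hab hMps
  rw [TgmAux.tgm_eq hX₁ hY, TgmAux.tgm_eq hX₂ hY, TgmAux.tgm_eq hC hY]
  have efin := congrArg Complex.re
    (TgmAux.trace_sqrt_congr hsplit (TgmAux.swap_psd hC hY) hMps)
  rw [efin]
  exact main
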